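/- Define T(a,b) for naturals a,b with a+b ≥ 1 by T(a,b) = {0, T(a-1,b) | 0, T(a,b-1)} (options with negative index omitted). Then: T(a,a) = *2 for a ≥ 1; T(a,b) = * when |a-b| = 1; T(a,b) = up^[a-b-1] + * when a ≥ b+2; and T(a,b) = down_[b-a-1] + * when b ≥ a+2. Here up^[n], down_[n] are the iterated up/down games (up^[1] = {0|*}, up^[n] = {up^[n-1]|*}; down_[1] = {*|0}, down_[n] = {*|down_[n-1]}), * = {0|0}, and *2 = {0,*|0,*}. -/

import Mathlib

/-! Combinatorial game theory (`SetTheory.PGame`) has been removed from Mathlib; the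
definitions used below are restated here with their old Mathlib meaning. -/

namespace SetTheory

universe u

/-- pre-games, as in the old `Mathlib.SetTheory.Game.PGame` -/
inductive PGame : Type (u + 1)
  | mk : ∀ α β : Type u, (α → PGame) → (β → PGame) → PGame

namespace PGame

/-- the game `{L | R}` with finitely many options given by lists -/
def ofLists (L R : List PGame.{u}) : PGame.{u} :=
  mk (ULift (Fin L.length)) (ULift (Fin R.length)) (fun i => L[i.down.1]) fun j => R[j.down.1]

/-- the zero game `{ | }` -/
instance : Zero PGame :=
  ⟨⟨PEmpty, PEmpty, PEmpty.elim, PEmpty.elim⟩⟩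

/-- sum of pre-games -/
noncomputable instance : Add PGame.{u} :=
  ⟨fun x y => by
    induction x generalizing y with | mk xl xr _ _ IHxl IHxr => _
    induction y with | mk yl yr yL yR IHyl IHyr => _
    have y := mk yl yr yL yR
    refine ⟨xl ⊕ yl, xr ⊕ yr, Sum.rec ?_ ?_, Sum.rec ?_ ?_⟩
    · exact fun i => IHxl i y
    · exact IHyl
    · exact fun i => IHxr i y
    · exact IHyr⟩

/-- the pair (`x ≤ y`, `x ⧏ y`), defined by the usual mutual recursion -/
noncomputable def leLF (x : PGame.{u}) : PGame.{u} → Prop × Prop := by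
  induction x with
  | mk xl xr xL xR IHl IHr =>
    intro y
    induction y with
    | mk yl yr yL yR JHl JHr =>
      exact ((∀ i, (IHl i (mk yl yr yL yR)).2) ∧ ∀ j, (JHr j).2,
        (∃ i, (JHl i).1) ∨ ∃ j, (IHr j (mk yl yr yL yR)).1)

/-- `x ≤ y` for pre-games -/
instance : LE PGame.{u} :=
  ⟨fun x y => (leLF x y).1⟩

/-- equivalence of pre-games: `x ≤ y ∧ y ≤ x` -/
instance : HasEquiv PGame.{u} :=
  ⟨fun x y => x ≤ y ∧ y ≤ x⟩

end PGame

end SetTheory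

open SetTheory PGame

/-- star = {0|0} -/
noncomputable def star' : PGame := PGame.ofLists [0] [0]
/-- up = {0|*} -/
noncomputable def up' : PGame := PGame.ofLists [0] [star']
/-- down = {*|0} -/
noncomputable def down' : PGame := PGame.ofLists [star'] [0]

/-- sum of n copies of up -/
noncomputable def nUp : ℕ → PGame
  | 0 => 0
  | n + 1 => nUp n + up'

/-- sum of n copies of down -/
noncomputable def nDown : ℕ → PGame
  | 0 => 0
  | n + 1 => nDown n + down'

/-- iterated up: up^[1] = ↑, up^[n] = {up^[n-1] | *} -/
noncomputable def upIter : ℕ → PGame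
  | 0 => 0
  | 1 => up'
  | n + 2 => PGame.ofLists [upIter (n + 1)] [star']

/-- iterated down: down_[1] = ↓, down_[n] = {* | down_[n-1]} -/
noncomputable def downIter : ℕ → PGame
  | 0 => 0
  | 1 => down'
  | n + 2 => PGame.ofLists [star'] [downIter (n + 1)]

/-- the nimber *2 = {0,* | 0,*} -/
noncomputable def star2 : PGame := PGame.ofLists [0, star'] [0, star']

/-- Partizan Domination game on a star: universal vertex colored C,
`a` leaves colored A, `b` leaves colored B (T 0 0 = 0: game over). -/
noncomputable def T : ℕ → ℕ → PGame
  | 0, 0 => 0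
  | a + 1, 0 => PGame.ofLists [0, T a 0] [0]
  | 0, b + 1 => PGame.ofLists [0] [0, T 0 b]
  | a + 1, b + 1 => PGame.ofLists [0, T a (b + 1)] [0, T (a + 1) b]


namespace SetTheory.PGame

/-- left moves -/
def LeftMoves : PGame → Type u_1
  | mk l _ _ _ => l

/-- right moves -/
def RightMoves : PGame → Type u_1
  | mk _ r _ _ => r

/-- left move -/
def moveLeft : ∀ g : PGame, LeftMoves g → PGame
  | mk _ _ L _ => L

/-- right move -/
def moveRight : ∀ g : PGame, RightMoves g → PGame
  | mk _ _ _ R => R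

/-- less or fuzzy -/
noncomputable def LF (x y : PGame) : Prop := (leLF x y).2

infix:50 " ⧏ " => LF

theorem le_def {x y : PGame} :
    x ≤ y ↔ (∀ i, x.moveLeft i ⧏ y) ∧ ∀ j, x ⧏ y.moveRight j := by
  cases x; cases y; exact Iff.rfl

theorem lf_def {x y : PGame} :
    x ⧏ y ↔ (∃ i, x ≤ y.moveLeft i) ∨ ∃ j, x.moveRight j ≤ y := by
  cases x; cases y; exact Iff.rfl

theorem le_of_forall_lf {x y : PGame} (h₁ : ∀ i, x.moveLeft i ⧏ y)
    (h₂ : ∀ j, x ⧏ y.moveRight j) : x ≤ y := le_def.2 ⟨h₁, h₂⟩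

theorem lf_of_le_moveLeft {x y : PGame} {i : y.LeftMoves} (h : x ≤ y.moveLeft i) : x ⧏ y :=
  lf_def.2 (Or.inl ⟨i, h⟩)

theorem lf_of_moveRight_le {x y : PGame} {j : x.RightMoves} (h : x.moveRight j ≤ y) : x ⧏ y :=
  lf_def.2 (Or.inr ⟨j, h⟩)

theorem zero_le_lf {x : PGame} : 0 ≤ x ↔ ∀ j, 0 ⧏ x.moveRight j := by
  rw [le_def]
  exact ⟨fun h => h.2, fun h => ⟨fun i => PEmpty.elim i, h⟩⟩

theorem le_refl' (x : PGame) : x ≤ x := by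
  induction x with
  | mk xl xr xL xR IHl IHr =>
    exact le_def.2 ⟨fun i => lf_of_le_moveLeft (i := i) (IHl i),
      fun j => lf_of_moveRight_le (j := j) (IHr j)⟩

theorem trans_aux (x : PGame) : ∀ y z : PGame,
    (x ≤ y → y ≤ z → x ≤ z) ∧ (x ⧏ y → y ≤ z → x ⧏ z) ∧ (x ≤ y → y ⧏ z → x ⧏ z) := by
  induction x with
  | mk xl xr xL xR IHxl IHxr =>
    intro y
    induction y with
    | mk yl yr yL yR IHyl IHyr =>
      intro z
      induction z with
      | mk zl zr zL zR IHzl IHzr =>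
        refine ⟨fun hxy hyz => le_def.2 ⟨fun i => (IHxl i _ _).2.1 ((le_def.1 hxy).1 i) hyz,
            fun j => (IHzr j).2.2 hxy ((le_def.1 hyz).2 j)⟩, fun hxy hyz => ?_, fun hxy hyz => ?_⟩
        · rcases lf_def.1 hxy with ⟨i, hi⟩ | ⟨j, hj⟩
          · exact (IHyl i _).2.2 hi ((le_def.1 hyz).1 i)
          · exact lf_def.2 (Or.inr ⟨j, (IHxr j _ _).1 hj hyz⟩)
        · rcases lf_def.1 hyz with ⟨i, hi⟩ | ⟨j, hj⟩
          · exact lf_def.2 (Or.inl ⟨i, (IHzl i).1 hxy hi⟩)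
          · exact (IHyr j _).2.1 ((le_def.1 hxy).2 j) hj

noncomputable instance : Preorder PGame where
  le x y := (leLF x y).1
  le_refl := le_refl'
  le_trans x y z := (trans_aux x y z).1

@[simp] theorem le_self_iff' (x : PGame) : x ≤ x ↔ True := iff_true_intro (le_refl' x)

theorem Equiv.le {x y : PGame} (h : x ≈ y) : x ≤ y := And.left h
theorem Equiv.ge {x y : PGame} (h : x ≈ y) : y ≤ x := And.right h
theorem Equiv.trans {x y z : PGame} (h1 : x ≈ y) (h2 : y ≈ z) : x ≈ z :=
  And.intro (le_trans (PGame.Equiv.le h1) (PGame.Equiv.le h2)) (le_trans (PGame.Equiv.ge h2) (PGame.Equiv.ge h1))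
theorem Equiv.symm {x y : PGame} (h : x ≈ y) : y ≈ x := And.intro (PGame.Equiv.ge h) (PGame.Equiv.le h)
theorem equiv_rfl {x : PGame} : x ≈ x := And.intro (le_refl' x) (le_refl' x)

theorem leftMoves_add (x y : PGame) : (x + y).LeftMoves = (x.LeftMoves ⊕ y.LeftMoves) := by
  cases x; cases y; rfl

theorem rightMoves_add (x y : PGame) : (x + y).RightMoves = (x.RightMoves ⊕ y.RightMoves) := by
  cases x; cases y; rfl

/-- left moves of a sum -/
noncomputable def toLeftMovesAdd {x y : PGame} : x.LeftMoves ⊕ y.LeftMoves ≃ (x + y).LeftMoves :=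
  _root_.Equiv.cast (leftMoves_add x y).symm

/-- right moves of a sum -/
noncomputable def toRightMovesAdd {x y : PGame} : x.RightMoves ⊕ y.RightMoves ≃ (x + y).RightMoves :=
  _root_.Equiv.cast (rightMoves_add x y).symm

theorem add_moveLeft_inl {x y : PGame} (i : x.LeftMoves) :
    (x + y).moveLeft (toLeftMovesAdd (Sum.inl i)) = x.moveLeft i + y := by
  cases x; cases y; rfl

theorem add_moveLeft_inr {x y : PGame} (i : y.LeftMoves) :
    (x + y).moveLeft (toLeftMovesAdd (Sum.inr i)) = x + y.moveLeft i := by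
  cases x; cases y; rfl

theorem add_moveRight_inl {x y : PGame} (i : x.RightMoves) :
    (x + y).moveRight (toRightMovesAdd (Sum.inl i)) = x.moveRight i + y := by
  cases x; cases y; rfl

theorem add_moveRight_inr {x y : PGame} (i : y.RightMoves) :
    (x + y).moveRight (toRightMovesAdd (Sum.inr i)) = x + y.moveRight i := by
  cases x; cases y; rfl

theorem leftMoves_add_cases {x y : PGame} (k : (x + y).LeftMoves) {P : (x + y).LeftMoves → Prop}
    (hl : ∀ i, P (toLeftMovesAdd (Sum.inl i))) (hr : ∀ i, P (toLeftMovesAdd (Sum.inr i))) :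
    P k := by
  obtain ⟨k', rfl⟩ : ∃ k', toLeftMovesAdd k' = k :=
    ⟨toLeftMovesAdd.symm k, _root_.Equiv.apply_symm_apply _ _⟩
  rcases k' with i | i
  · exact hl i
  · exact hr i

theorem rightMoves_add_cases {x y : PGame} (k : (x + y).RightMoves) {P : (x + y).RightMoves → Prop}
    (hl : ∀ i, P (toRightMovesAdd (Sum.inl i))) (hr : ∀ i, P (toRightMovesAdd (Sum.inr i))) :
    P k := by
  obtain ⟨k', rfl⟩ : ∃ k', toRightMovesAdd k' = k :=
    ⟨toRightMovesAdd.symm k, _root_.Equiv.apply_symm_apply _ _⟩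
  rcases k' with i | i
  · exact hl i
  · exact hr i

theorem add_zero_equiv (x : PGame) : x + 0 ≈ x := by
  induction x with
  | mk xl xr xL xR IHl IHr =>
    refine And.intro (le_of_forall_lf (fun k => ?_) (fun j => ?_))
      (le_of_forall_lf (fun i => ?_) (fun k => ?_))
    · obtain ⟨k, rfl⟩ := (_root_.Equiv.surjective toLeftMovesAdd) k
      rcases k with i | i
      · rw [add_moveLeft_inl]
        exact lf_of_le_moveLeft (i := i) (PGame.Equiv.le (IHl i))
      · exact PEmpty.elim i
    · exact lf_of_moveRight_le (j := toRightMovesAdd (Sum.inl j))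
        (by rw [add_moveRight_inl]; exact PGame.Equiv.le (IHr j))
    · exact lf_of_le_moveLeft (i := toLeftMovesAdd (Sum.inl i))
        (by rw [add_moveLeft_inl]; exact PGame.Equiv.ge (IHl i))
    · obtain ⟨k, rfl⟩ := (_root_.Equiv.surjective toRightMovesAdd) k
      rcases k with j | j
      · rw [add_moveRight_inl]
        exact lf_of_moveRight_le (j := j) (PGame.Equiv.ge (IHr j))
      · exact PEmpty.elim j

theorem zero_add_equiv (x : PGame) : 0 + x ≈ x := by
  induction x with
  | mk xl xr xL xR IHl IHr =>
    refine And.intro (le_of_forall_lf (fun k => ?_) (fun j => ?_))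
      (le_of_forall_lf (fun i => ?_) (fun k => ?_))
    · obtain ⟨k, rfl⟩ := (_root_.Equiv.surjective toLeftMovesAdd) k
      rcases k with i | i
      · exact PEmpty.elim i
      · rw [add_moveLeft_inr]
        exact lf_of_le_moveLeft (i := i) (PGame.Equiv.le (IHl i))
    · exact lf_of_moveRight_le (j := toRightMovesAdd (Sum.inr j))
        (by rw [add_moveRight_inr]; exact PGame.Equiv.le (IHr j))
    · exact lf_of_le_moveLeft (i := toLeftMovesAdd (Sum.inr i))
        (by rw [add_moveLeft_inr]; exact PGame.Equiv.ge (IHl i))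
    · obtain ⟨k, rfl⟩ := (_root_.Equiv.surjective toRightMovesAdd) k
      rcases k with j | j
      · exact PEmpty.elim j
      · rw [add_moveRight_inr]
        exact lf_of_moveRight_le (j := j) (PGame.Equiv.ge (IHr j))

theorem add_mono_aux (x : PGame) : ∀ y z : PGame,
    (x ≤ y → x + z ≤ y + z) ∧ (x ⧏ y → x + z ⧏ y + z) := by
  induction x with
  | mk xl xr xL xR IHxl IHxr =>
    intro y
    induction y with
    | mk yl yr yL yR IHyl IHyr =>
      intro z
      induction z with
      | mk zl zr zL zR IHzl IHzr =>
        refine ⟨fun h => le_of_forall_lf (fun k => ?_) (fun k => ?_), fun h => ?_⟩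
        · obtain ⟨k, rfl⟩ := (_root_.Equiv.surjective toLeftMovesAdd) k
          rcases k with i | i
          · rw [add_moveLeft_inl]
            exact (IHxl i _ _).2 ((le_def.1 h).1 i)
          · rw [add_moveLeft_inr]
            exact lf_of_le_moveLeft (i := toLeftMovesAdd (Sum.inr i))
              (by rw [add_moveLeft_inr]; exact (IHzl i).1 h)
        · obtain ⟨k, rfl⟩ := (_root_.Equiv.surjective toRightMovesAdd) k
          rcases k with j | j
          · rw [add_moveRight_inl]
            exact (IHyr j _).2 ((le_def.1 h).2 j)
          · rw [add_moveRight_inr]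
            exact lf_of_moveRight_le (j := toRightMovesAdd (Sum.inr j))
              (by rw [add_moveRight_inr]; exact (IHzr j).1 h)
        · rcases lf_def.1 h with ⟨i, hi⟩ | ⟨j, hj⟩
          · exact lf_of_le_moveLeft (i := toLeftMovesAdd (Sum.inl i))
              (by rw [add_moveLeft_inl]; exact (IHyl i _).1 hi)
          · exact lf_of_moveRight_le (j := toRightMovesAdd (Sum.inl j))
              (by rw [add_moveRight_inl]; exact (IHxr j _ _).1 hj)

theorem add_le_add_right {x y : PGame} (h : x ≤ y) (z : PGame) : x + z ≤ y + z :=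
  (add_mono_aux x y z).1 h

/-- negation of pre-games -/
def neg : PGame → PGame
  | mk l r L R => mk r l (fun i => neg (R i)) fun i => neg (L i)

instance : Neg PGame := ⟨neg⟩

theorem neg_def {xl xr : Type u_1} {xL : xl → PGame} {xR : xr → PGame} :
    -mk xl xr xL xR = mk xr xl (fun j => -xR j) fun i => -xL i := rfl

@[simp] theorem neg_zero : -(0 : PGame) = 0 := by
  change mk PEmpty PEmpty (fun j => -PEmpty.elim j) (fun i => -PEmpty.elim i) =
    mk PEmpty PEmpty PEmpty.elim PEmpty.elim
  congr 1 <;> funext i <;> exact PEmpty.elim i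

theorem neg_le_lf_neg_iff (x : PGame) : ∀ y : PGame, (-y ≤ -x ↔ x ≤ y) ∧ (-y ⧏ -x ↔ x ⧏ y) := by
  induction x with
  | mk xl xr xL xR IHxl IHxr =>
    intro y
    induction y with
    | mk yl yr yL yR IHyl IHyr =>
      refine ⟨⟨fun h => le_def.2 ⟨fun i => (IHxl i _).2.1 ((le_def.1 h).2 i),
          fun j => (IHyr j).2.1 ((le_def.1 h).1 j)⟩,
        fun h => le_def.2 ⟨fun i => (IHyr i).2.2 ((le_def.1 h).2 i),
          fun j => (IHxl j _).2.2 ((le_def.1 h).1 j)⟩⟩, ⟨fun h => ?_, fun h => ?_⟩⟩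
      · rcases lf_def.1 h with ⟨i, hi⟩ | ⟨j, hj⟩
        · exact lf_def.2 (Or.inr ⟨i, (IHxr i _).1.1 hi⟩)
        · exact lf_def.2 (Or.inl ⟨j, (IHyl j).1.1 hj⟩)
      · rcases lf_def.1 h with ⟨i, hi⟩ | ⟨j, hj⟩
        · exact lf_def.2 (Or.inr ⟨i, (IHyl i).1.2 hi⟩)
        · exact lf_def.2 (Or.inl ⟨j, (IHxr j _).1.2 hj⟩)

theorem neg_equiv_neg_iff {x y : PGame} : -x ≈ -y ↔ x ≈ y :=
  ⟨fun h => And.intro ((neg_le_lf_neg_iff x y).1.1 (PGame.Equiv.ge h))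
      ((neg_le_lf_neg_iff y x).1.1 (PGame.Equiv.le h)),
    fun h => And.intro ((neg_le_lf_neg_iff y x).1.2 (PGame.Equiv.ge h))
      ((neg_le_lf_neg_iff x y).1.2 (PGame.Equiv.le h))⟩

theorem neg_add (x : PGame) : ∀ y : PGame, -(x + y) = -x + -y := by
  induction x with
  | mk xl xr xL xR IHxl IHxr =>
    intro y
    induction y with
    | mk yl yr yL yR IHyl IHyr =>
      show mk (xr ⊕ yr) (xl ⊕ yl) _ _ = mk (xr ⊕ yr) (xl ⊕ yl) _ _
      congr 1 <;> funext k <;> rcases k with i | j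
      · exact IHxr i _
      · exact IHyr j
      · exact IHxl i _
      · exact IHyl j

theorem heq_aux.{v, w} {n m : ℕ} (h : n = m) (g : Fin n → PGame.{v}) (g' : Fin m → PGame.{v})
    (hg : ∀ i : Fin n, g i = g' (Fin.cast h i)) :
    HEq (fun i : ULift.{w} (Fin n) => g i.down) (fun i : ULift.{w} (Fin m) => g' i.down) := by
  subst h
  exact heq_of_eq (funext fun i => hg i.down)

theorem neg_ofLists (L R : List PGame) :
    -ofLists L R = ofLists (R.map fun x => -x) (L.map fun x => -x) := by
  have h1 : (R.map fun x : PGame => -x).length = R.length := by simp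
  have h2 : (L.map fun x : PGame => -x).length = L.length := by simp
  unfold ofLists
  rw [neg_def, mk.injEq]
  exact ⟨by rw [h1], by rw [h2],
    heq_aux h1.symm (fun k => -R[k.1]) (fun k => (R.map fun x => -x)[k.1]) (fun i => by simp),
    heq_aux h2.symm (fun k => -L[k.1]) (fun k => (L.map fun x => -x)[k.1]) (fun i => by simp)⟩

theorem ofLists_moveLeft' {L R : List PGame} (i : (ofLists L R).LeftMoves) :
    (ofLists L R).moveLeft i = L[(ULift.down (α := Fin L.length) i).1] := rfl

theorem ofLists_moveRight' {L R : List PGame} (i : (ofLists L R).RightMoves) :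
    (ofLists L R).moveRight i = R[(ULift.down (α := Fin R.length) i).1] := rfl

theorem ofLists_moveLeft {L R : List PGame} (i : Fin L.length) :
    (ofLists L R).moveLeft (ULift.up i) = L[i.1] := rfl

theorem ofLists_moveRight {L R : List PGame} (i : Fin R.length) :
    (ofLists L R).moveRight (ULift.up i) = R[i.1] := rfl

end SetTheory.PGame

-- congruence for ofLists
lemma ofLists_le_ofLists {l1 r1 l2 r2 : List PGame}
    (hL : ∀ x ∈ l1, ∃ y ∈ l2, x ≤ y) (hR : ∀ y ∈ r2, ∃ x ∈ r1, x ≤ y) :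
    PGame.ofLists l1 r1 ≤ PGame.ofLists l2 r2 := by
  apply le_of_forall_lf
  · intro i
    rw [ofLists_moveLeft']
    obtain ⟨y, hy, hxy⟩ := hL _ (List.getElem_mem _)
    obtain ⟨j, hj, rfl⟩ := List.getElem_of_mem hy
    exact lf_of_le_moveLeft (i := ULift.up ⟨j, hj⟩) (by rwa [ofLists_moveLeft])
  · intro j
    rw [ofLists_moveRight']
    obtain ⟨x, hx, hxy⟩ := hR _ (List.getElem_mem _)
    obtain ⟨i, hi, rfl⟩ := List.getElem_of_mem hx
    exact lf_of_moveRight_le (j := ULift.up ⟨i, hi⟩) (by rwa [ofLists_moveRight])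

lemma ofLists_equiv {l1 r1 l2 r2 : List PGame}
    (hL1 : ∀ x ∈ l1, ∃ y ∈ l2, x ≈ y) (hL2 : ∀ y ∈ l2, ∃ x ∈ l1, x ≈ y)
    (hR1 : ∀ x ∈ r1, ∃ y ∈ r2, x ≈ y) (hR2 : ∀ y ∈ r2, ∃ x ∈ r1, x ≈ y) :
    PGame.ofLists l1 r1 ≈ PGame.ofLists l2 r2 := by
  constructor
  · exact ofLists_le_ofLists
      (fun x hx => let ⟨y, hy, h⟩ := hL1 x hx; ⟨y, hy, PGame.Equiv.le h⟩)
      (fun y hy => let ⟨x, hx, h⟩ := hR2 y hy; ⟨x, hx, PGame.Equiv.le h⟩)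
  · exact ofLists_le_ofLists
      (fun x hx => let ⟨y, hy, h⟩ := hL2 x hx; ⟨y, hy, PGame.Equiv.ge h⟩)
      (fun y hy => let ⟨x, hx, h⟩ := hR1 y hy; ⟨x, hx, PGame.Equiv.ge h⟩)

lemma equiv22 {a b c d a' b' c' d' : PGame} (h1 : a ≈ a') (h2 : b ≈ b')
    (h3 : c ≈ c') (h4 : d ≈ d') :
    PGame.ofLists [a, b] [c, d] ≈ PGame.ofLists [a', b'] [c', d'] := by
  apply ofLists_equiv <;> intro x hx <;> simp only [List.mem_cons, List.mem_singleton,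
    List.not_mem_nil, or_false] at hx <;> rcases hx with rfl | rfl
  · exact ⟨a', by simp, h1⟩
  · exact ⟨b', by simp, h2⟩
  · exact ⟨a, by simp, h1⟩
  · exact ⟨b, by simp, h2⟩
  · exact ⟨c', by simp, h3⟩
  · exact ⟨d', by simp, h4⟩
  · exact ⟨c, by simp, h3⟩
  · exact ⟨d, by simp, h4⟩

lemma equiv21 {a b c a' b' c' : PGame} (h1 : a ≈ a') (h2 : b ≈ b') (h3 : c ≈ c') :
    PGame.ofLists [a, b] [c] ≈ PGame.ofLists [a', b'] [c'] := by
  apply ofLists_equiv <;> intro x hx <;> simp only [List.mem_cons, List.mem_singleton,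
    List.not_mem_nil, or_false] at hx
  · rcases hx with rfl | rfl
    · exact ⟨a', by simp, h1⟩
    · exact ⟨b', by simp, h2⟩
  · rcases hx with rfl | rfl
    · exact ⟨a, by simp, h1⟩
    · exact ⟨b, by simp, h2⟩
  · subst hx; exact ⟨c', by simp, h3⟩
  · subst hx; exact ⟨c, by simp, h3⟩

-- basic facts
lemma upIter_succ (n : ℕ) : upIter (n + 1) = PGame.ofLists [upIter n] [star'] := by
  cases n <;> rfl

lemma neg_star' : -star' = star' := by
  rw [star', neg_ofLists]; simp

lemma zero_lf_star' : (0 : PGame) ⧏ star' := by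
  rw [star']
  exact lf_of_le_moveLeft (i := ULift.up (0 : Fin 1)) (by rw [ofLists_moveLeft]; simp)

lemma star'_lf_zero : star' ⧏ 0 := by
  rw [star']
  exact lf_of_moveRight_le (j := ULift.up (0 : Fin 1)) (by rw [ofLists_moveRight]; simp)

lemma zero_le_upIter (n : ℕ) : (0 : PGame) ≤ upIter n := by
  induction n with
  | zero => exact le_rfl
  | succ n ih =>
    rw [upIter_succ, zero_le_lf]
    intro j
    rw [ofLists_moveRight']
    simpa using zero_lf_star'

lemma star'_moveLeft (i : star'.LeftMoves) : star'.moveLeft i = 0 := by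
  obtain ⟨i⟩ := i; fin_cases i; rfl

lemma star'_moveRight (j : star'.RightMoves) : star'.moveRight j = 0 := by
  obtain ⟨j⟩ := j; fin_cases j; rfl

lemma star'_add_star'_equiv : star' + star' ≈ 0 := by
  have h00 : (0 : PGame) + 0 ≈ 0 := add_zero_equiv 0
  constructor
  · apply le_of_forall_lf
    · intro i
      obtain ⟨i, rfl⟩ := (_root_.Equiv.surjective toLeftMovesAdd) i
      rcases i with i' | i'
      · rw [add_moveLeft_inl, star'_moveLeft]
        exact lf_of_moveRight_le (j := toRightMovesAdd (Sum.inr (ULift.up (0 : Fin 1))))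
          (by erw [add_moveRight_inr, star'_moveRight]; exact PGame.Equiv.le h00)
      · rw [add_moveLeft_inr, star'_moveLeft]
        exact lf_of_moveRight_le (j := toRightMovesAdd (Sum.inl (ULift.up (0 : Fin 1))))
          (by erw [add_moveRight_inl, star'_moveRight]; exact PGame.Equiv.le h00)
    · intro j; exact PEmpty.elim j
  · rw [zero_le_lf]
    intro j
    obtain ⟨j, rfl⟩ := (_root_.Equiv.surjective toRightMovesAdd) j
    rcases j with j' | j'
    · rw [add_moveRight_inl, star'_moveRight]
      exact lf_of_le_moveLeft (i := toLeftMovesAdd (Sum.inr (ULift.up (0 : Fin 1))))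
        (by erw [add_moveLeft_inr, star'_moveLeft]; exact PGame.Equiv.ge h00)
    · rw [add_moveRight_inr, star'_moveRight]
      exact lf_of_le_moveLeft (i := toLeftMovesAdd (Sum.inl (ULift.up (0 : Fin 1))))
        (by erw [add_moveLeft_inl, star'_moveLeft]; exact PGame.Equiv.ge h00)

lemma zero_le_star'_add_star' : (0 : PGame) ≤ star' + star' := PGame.Equiv.ge star'_add_star'_equiv
lemma star'_add_star'_le_zero : star' + star' ≤ 0 := PGame.Equiv.le star'_add_star'_equiv

lemma zero_le_upIter_add_zero (n : ℕ) : (0 : PGame) ≤ upIter n + 0 :=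
  (zero_le_upIter n).trans (PGame.Equiv.ge (add_zero_equiv _))

lemma star'_le_upIter_add_star' (n : ℕ) : star' ≤ upIter n + star' :=
  (PGame.Equiv.ge (zero_add_equiv star')).trans (add_le_add_right (zero_le_upIter n) star')

lemma zero_lf_upIter_add_star' (n : ℕ) : (0 : PGame) ⧏ upIter n + star' := by
  refine lf_of_le_moveLeft (i := toLeftMovesAdd (Sum.inr (ULift.up (0 : Fin 1)))) ?_
  erw [add_moveLeft_inr]
  exact zero_le_upIter_add_zero n

lemma upIter_add_star'_lf_zero (n : ℕ) : upIter (n + 1) + star' ⧏ 0 := by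
  rw [upIter_succ]
  refine lf_of_moveRight_le (j := toRightMovesAdd (Sum.inl (ULift.up (0 : Fin 1)))) ?_
  erw [add_moveRight_inl]
  exact star'_add_star'_le_zero

lemma star'_le_U {l : List PGame} : star' ≤ PGame.ofLists (0 :: l) [0] := by
  apply le_of_forall_lf
  · intro i
    refine lf_of_le_moveLeft (i := ULift.up (⟨0, by simp⟩ : Fin (0 :: l).length)) ?_
    show star'.moveLeft i ≤ 0
    obtain ⟨i⟩ := i
    fin_cases i
    exact le_rfl
  · intro j
    obtain ⟨j⟩ := j
    fin_cases j
    exact star'_lf_zero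

lemma lemU (n : ℕ) : PGame.ofLists [0, upIter n + star'] [0] ≈ upIter (n + 1) + star' := by
  rw [upIter_succ]
  constructor
  · apply le_of_forall_lf
    · intro i
      rw [ofLists_moveLeft']
      obtain ⟨i⟩ := i
      fin_cases i
      · show (0 : PGame) ⧏ _
        have := zero_lf_upIter_add_star' (n + 1)
        rwa [upIter_succ] at this
      · show upIter n + star' ⧏ _
        refine lf_of_le_moveLeft (i := toLeftMovesAdd (Sum.inl (ULift.up (0 : Fin 1)))) ?_
        erw [add_moveLeft_inl]
        exact le_rfl
    · intro j
      refine rightMoves_add_cases (P := fun j =>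
        PGame.ofLists [0, upIter n + star'] [0] ⧏
          (PGame.ofLists [upIter n] [star'] + star').moveRight j) j ?_ ?_
      · intro j'
        rw [add_moveRight_inl]
        refine lf_of_moveRight_le (j := ULift.up (0 : Fin 1)) ?_
        show (0 : PGame) ≤ _
        obtain ⟨j'⟩ := j'
        fin_cases j'
        exact zero_le_star'_add_star'
      · intro j'
        rw [add_moveRight_inr]
        refine lf_of_moveRight_le (j := ULift.up (0 : Fin 1)) ?_
        show (0 : PGame) ≤ _
        obtain ⟨j'⟩ := j'
        fin_cases j'
        have := zero_le_upIter_add_zero (n + 1)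
        rwa [upIter_succ] at this
  · apply le_of_forall_lf
    · intro i
      refine leftMoves_add_cases (P := fun i =>
        (PGame.ofLists [upIter n] [star'] + star').moveLeft i ⧏
          PGame.ofLists [0, upIter n + star'] [0]) i ?_ ?_
      · intro i'
        rw [add_moveLeft_inl]
        refine lf_of_le_moveLeft (i := ULift.up (1 : Fin 2)) ?_
        obtain ⟨i'⟩ := i'
        fin_cases i'
        show upIter n + star' ≤ _
        rw [ofLists_moveLeft]
        exact le_rfl
      · intro i'
        rw [add_moveLeft_inr]
        obtain ⟨i'⟩ := i'
        fin_cases i'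
        refine lf_of_moveRight_le
          (j := toRightMovesAdd (Sum.inl (ULift.up (0 : Fin 1)))) ?_
        erw [add_moveRight_inl]
        show star' + 0 ≤ _
        exact (PGame.Equiv.le (add_zero_equiv star')).trans star'_le_U
    · intro j
      obtain ⟨j⟩ := j
      fin_cases j
      show _ ⧏ (0 : PGame)
      have := upIter_add_star'_lf_zero n
      rwa [upIter_succ] at this

lemma upIter_succ_moveLeft : ∀ (n : ℕ) (i : (upIter (n + 1)).LeftMoves),
    (upIter (n + 1)).moveLeft i = upIter n
  | 0, i => by obtain ⟨i⟩ := i; fin_cases i; rfl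
  | n + 1, i => by obtain ⟨i⟩ := i; fin_cases i; rfl

lemma upIter_succ_moveRight : ∀ (n : ℕ) (j : (upIter (n + 1)).RightMoves),
    (upIter (n + 1)).moveRight j = star'
  | 0, j => by obtain ⟨j⟩ := j; fin_cases j; rfl
  | n + 1, j => by obtain ⟨j⟩ := j; fin_cases j; rfl

lemma upIter_add_star'_lf_succ (n : ℕ) :
    upIter n + star' ⧏ upIter (n + 1) + star' := by
  have h : upIter n + star' ⧏ PGame.ofLists [upIter n] [star'] + star' := by
    refine lf_of_le_moveLeft (i := toLeftMovesAdd (Sum.inl (ULift.up (0 : Fin 1)))) ?_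
    erw [add_moveLeft_inl]
    show upIter n + star' ≤ upIter n + star'
    exact le_rfl
  rwa [← upIter_succ] at h

lemma star'_lf_upIter_succ_add (n : ℕ) : star' ⧏ upIter (n + 1) + star' := by
  have h : star' ⧏ PGame.ofLists [upIter n] [star'] + star' := by
    refine lf_of_le_moveLeft (i := toLeftMovesAdd (Sum.inl (ULift.up (0 : Fin 1)))) ?_
    erw [add_moveLeft_inl]
    show star' ≤ upIter n + star'
    exact star'_le_upIter_add_star' n
  rwa [← upIter_succ] at h

lemma upIter_succ_add_zero_lf {X : PGame} (n : ℕ) (h : star' ≤ X) :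
    upIter (n + 1) + 0 ⧏ X := by
  have h2 : PGame.ofLists [upIter n] [star'] + 0 ⧏ X := by
    refine lf_of_moveRight_le (j := toRightMovesAdd (Sum.inl (ULift.up (0 : Fin 1)))) ?_
    erw [add_moveRight_inl]
    show star' + 0 ≤ X
    exact (PGame.Equiv.le (add_zero_equiv star')).trans h
  rwa [← upIter_succ] at h2

lemma lemV (n : ℕ) :
    PGame.ofLists [0, upIter n + star'] [0, upIter (n + 2) + star'] ≈
      upIter (n + 1) + star' := by
  have hstarle : star' ≤
      PGame.ofLists [0, upIter n + star'] [0, upIter (n + 2) + star'] := by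
    apply le_of_forall_lf
    · intro i
      show star'.moveLeft i ⧏ _
      obtain ⟨i⟩ := i; fin_cases i
      show (0 : PGame) ⧏ _
      exact lf_of_le_moveLeft (i := ULift.up (0 : Fin 2)) (by rw [ofLists_moveLeft]; simp)
    · intro j
      rw [ofLists_moveRight']
      obtain ⟨j⟩ := j; fin_cases j
      · exact star'_lf_zero
      · show star' ⧏ upIter (n + 2) + star'
        exact star'_lf_upIter_succ_add (n + 1)
  constructor
  · apply le_of_forall_lf
    · intro i
      rw [ofLists_moveLeft']
      obtain ⟨i⟩ := i; fin_cases i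
      · show (0 : PGame) ⧏ _
        exact zero_lf_upIter_add_star' (n + 1)
      · show upIter n + star' ⧏ _
        exact upIter_add_star'_lf_succ n
    · intro j
      refine rightMoves_add_cases (P := fun j =>
        PGame.ofLists [0, upIter n + star'] [0, upIter (n + 2) + star'] ⧏
          (upIter (n + 1) + star').moveRight j) j ?_ ?_
      · intro j'
        rw [add_moveRight_inl, upIter_succ_moveRight]
        refine lf_of_moveRight_le (j := ULift.up (0 : Fin 2)) ?_
        show (0 : PGame) ≤ _
        exact zero_le_star'_add_star'
      · intro j'
        rw [add_moveRight_inr]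
        obtain ⟨j'⟩ := j'; fin_cases j'
        refine lf_of_moveRight_le (j := ULift.up (0 : Fin 2)) ?_
        show (0 : PGame) ≤ upIter (n + 1) + 0
        exact zero_le_upIter_add_zero (n + 1)
  · apply le_of_forall_lf
    · intro i
      refine leftMoves_add_cases (P := fun i =>
        (upIter (n + 1) + star').moveLeft i ⧏
          PGame.ofLists [0, upIter n + star'] [0, upIter (n + 2) + star']) i ?_ ?_
      · intro i'
        rw [add_moveLeft_inl, upIter_succ_moveLeft]
        refine lf_of_le_moveLeft (i := ULift.up (1 : Fin 2)) ?_
        exact le_rfl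
      · intro i'
        rw [add_moveLeft_inr]
        obtain ⟨i'⟩ := i'; fin_cases i'
        show upIter (n + 1) + 0 ⧏ _
        exact upIter_succ_add_zero_lf n hstarle
    · intro j
      rw [ofLists_moveRight']
      obtain ⟨j⟩ := j; fin_cases j
      · show _ ⧏ (0 : PGame)
        exact upIter_add_star'_lf_zero n
      · show upIter (n + 1) + star' ⧏ upIter (n + 2) + star'
        exact upIter_add_star'_lf_succ (n + 1)

lemma lemS2 : PGame.ofLists [0, star2] [0, upIter 1 + star'] ≈ star' := by
  constructor
  · apply le_of_forall_lf
    · intro i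
      rw [ofLists_moveLeft']
      obtain ⟨i⟩ := i; fin_cases i
      · exact zero_lf_star'
      · show star2 ⧏ star'
        refine lf_of_moveRight_le (j := ULift.up (1 : Fin 2)) ?_
        show star' ≤ star'
        exact le_rfl
    · intro j
      obtain ⟨j⟩ := j; fin_cases j
      show _ ⧏ (0 : PGame)
      refine lf_of_moveRight_le (j := ULift.up (0 : Fin 2)) ?_
      show (0 : PGame) ≤ 0
      exact le_rfl
  · apply le_of_forall_lf
    · intro i
      obtain ⟨i⟩ := i; fin_cases i
      show (0 : PGame) ⧏ _
      refine lf_of_le_moveLeft (i := ULift.up (0 : Fin 2)) ?_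
      show (0 : PGame) ≤ 0
      exact le_rfl
    · intro j
      rw [ofLists_moveRight']
      obtain ⟨j⟩ := j; fin_cases j
      · exact star'_lf_zero
      · show star' ⧏ upIter 1 + star'
        exact star'_lf_upIter_succ_add 0

lemma neg_zero' : -(0 : PGame) = 0 := neg_zero

lemma downIter_neg : ∀ n : ℕ, downIter n = -upIter n
  | 0 => by simp [downIter, upIter]
  | 1 => by
      show down' = -up'
      rw [up', down', neg_ofLists]
      simp [neg_star']
  | n + 2 => by
      show PGame.ofLists [star'] [downIter (n + 1)] = _
      rw [show upIter (n + 2) = PGame.ofLists [upIter (n + 1)] [star'] from rfl,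
        neg_ofLists]
      simp [neg_star', downIter_neg (n + 1)]

lemma T_neg_aux : ∀ m : ℕ, ∀ a b : ℕ, a + b ≤ m → T a b = -T b a := by
  intro m
  induction m with
  | zero =>
    intro a b h
    obtain ⟨rfl, rfl⟩ : a = 0 ∧ b = 0 := by omega
    simp [T]
  | succ m ih =>
    intro a b h
    match a, b with
    | 0, 0 => simp [T]
    | a + 1, 0 =>
      simp only [T]
      rw [neg_ofLists]
      simp [ih a 0 (by omega)]
    | 0, b + 1 =>
      simp only [T]
      rw [neg_ofLists]
      simp [ih 0 b (by omega)]
    | a + 1, b + 1 =>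
      simp only [T]
      rw [neg_ofLists]
      simp [ih a (b + 1) (by omega), ih (a + 1) b (by omega)]

lemma T_neg (a b : ℕ) : T a b = -T b a := T_neg_aux (a + b) a b le_rfl

lemma star'_equiv_up0 : star' ≈ upIter 0 + star' := by
  rw [show upIter 0 = (0 : PGame) from by simp [upIter]]
  exact PGame.Equiv.symm (zero_add_equiv star')

lemma T10_equiv : T 1 0 ≈ star' := by
  have e : T 1 0 = PGame.ofLists [0, 0] [0] := by simp only [T]
  rw [e, star']
  apply ofLists_equiv <;> intro x hx <;> simp only [List.mem_cons,
    List.mem_singleton, List.not_mem_nil, or_false] at hx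
  · rcases hx with rfl | rfl <;> exact ⟨0, by simp, equiv_rfl⟩
  · subst hx; exact ⟨0, by simp, equiv_rfl⟩
  · subst hx; exact ⟨0, by simp, equiv_rfl⟩
  · subst hx; exact ⟨0, by simp, equiv_rfl⟩

universe u in
lemma key (m : ℕ) :
    (∀ k b : ℕ, k + 2 * b + 1 ≤ m → T.{u} (b + k + 1) b ≈ upIter.{u} k + star'.{u}) ∧
    (∀ a : ℕ, 2 * a ≤ m → 1 ≤ a → T.{u} a a ≈ star2.{u}) := by
  induction m with
  | zero =>
    exact ⟨fun k b h => absurd h (by omega), fun a h h1 => absurd h (by omega)⟩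
  | succ m ih =>
    obtain ⟨ih1, ih2⟩ := ih
    constructor
    · intro k b h
      match k, b with
      | 0, 0 =>
        show T 1 0 ≈ upIter 0 + star'
        exact PGame.Equiv.trans T10_equiv star'_equiv_up0
      | 0, c + 1 =>
        show T (c + 2) (c + 1) ≈ upIter 0 + star'
        have e : T (c + 2) (c + 1)
            = PGame.ofLists [0, T (c + 1) (c + 1)] [0, T (c + 2) c] := by
          simp only [T]
        have hA : T (c + 1) (c + 1) ≈ star2 := ih2 (c + 1) (by omega) (by omega)
        have hB : T (c + 2) c ≈ upIter 1 + star' := by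
          have h2 := ih1 1 c (by omega)
          rwa [show c + 1 + 1 = c + 2 from by omega] at h2
        rw [e]
        exact PGame.Equiv.trans (equiv22 equiv_rfl hA equiv_rfl hB)
          (PGame.Equiv.trans lemS2 star'_equiv_up0)
      | κ + 1, 0 =>
        rw [show (0 : ℕ) + (κ + 1) + 1 = κ + 2 from by omega]
        have e : T (κ + 2) 0 = PGame.ofLists [0, T (κ + 1) 0] [0] := by
          simp only [T]
        have hA : T (κ + 1) 0 ≈ upIter κ + star' := by
          have h2 := ih1 κ 0 (by omega)
          rwa [show (0 : ℕ) + κ + 1 = κ + 1 from by omega] at h2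
        rw [e]
        exact PGame.Equiv.trans (equiv21 equiv_rfl hA equiv_rfl) (lemU κ)
      | κ + 1, c + 1 =>
        show T (c + 1 + κ + 2) (c + 1) ≈ upIter (κ + 1) + star'
        have e : T (c + 1 + κ + 2) (c + 1)
            = PGame.ofLists [0, T (c + 1 + κ + 1) (c + 1)] [0, T (c + 1 + κ + 2) c] := by
          simp only [T]
        have hA : T (c + 1 + κ + 1) (c + 1) ≈ upIter κ + star' :=
          ih1 κ (c + 1) (by omega)
        have hB : T (c + 1 + κ + 2) c ≈ upIter (κ + 2) + star' := by
          have h2 := ih1 (κ + 2) c (by omega)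
          rwa [show c + (κ + 2) + 1 = c + 1 + κ + 2 from by omega] at h2
        rw [e]
        exact PGame.Equiv.trans (equiv22 equiv_rfl hA equiv_rfl hB) (lemV κ)
    · intro a hm h1
      match a with
      | c + 1 =>
        have e : T (c + 1) (c + 1)
            = PGame.ofLists [0, T c (c + 1)] [0, T (c + 1) c] := by
          simp only [T]
        have hB : T (c + 1) c ≈ star' := by
          have h2 := ih1 0 c (by omega)
          exact PGame.Equiv.trans h2 (PGame.Equiv.symm star'_equiv_up0)
        have hA : T c (c + 1) ≈ star' := by
          rw [T_neg c (c + 1)]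
          have h3 := neg_equiv_neg_iff.2 hB
          rwa [neg_star'] at h3
        rw [e]
        exact equiv22 equiv_rfl hA equiv_rfl hB

theorem stmt15 (a b : ℕ) (h : 1 ≤ a + b) :
    (a = b → T a b ≈ star2) ∧
    ((a = b + 1 ∨ b = a + 1) → T a b ≈ star') ∧
    (b + 2 ≤ a → T a b ≈ upIter (a - b - 1) + star') ∧
    (a + 2 ≤ b → T a b ≈ downIter (b - a - 1) + star') := by
  refine ⟨?_, ?_, ?_, ?_⟩
  · rintro rfl
    exact (key (a + a)).2 a (by omega) (by omega)
  · rintro (rfl | rfl)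
    · have h2 := (key ((b + 1) + b)).1 0 b (by omega)
      exact PGame.Equiv.trans h2 (PGame.Equiv.symm star'_equiv_up0)
    · have h2 := (key (a + (a + 1))).1 0 a (by omega)
      have hb' : T (a + 1) a ≈ star' :=
        PGame.Equiv.trans h2 (PGame.Equiv.symm star'_equiv_up0)
      rw [T_neg a (a + 1)]
      have h3 := neg_equiv_neg_iff.2 hb'
      rwa [neg_star'] at h3
  · intro h2
    obtain ⟨k, rfl⟩ : ∃ k, a = b + k + 1 := ⟨a - b - 1, by omega⟩
    rw [show b + k + 1 - b - 1 = k from by omega]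
    exact (key (b + k + 1 + b)).1 k b (by omega)
  · intro h2
    obtain ⟨k, rfl⟩ : ∃ k, b = a + k + 1 := ⟨b - a - 1, by omega⟩
    rw [show a + k + 1 - a - 1 = k from by omega, T_neg a (a + k + 1), downIter_neg]
    have h3 := neg_equiv_neg_iff.2 ((key (a + (a + k + 1))).1 k a (by omega))
    refine PGame.Equiv.trans h3 ?_
    rw [PGame.neg_add, neg_star']
    exact equiv_rfl
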